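/- arXiv:1201.3483 — 5 statements merged into one kernel-verified Lean document; each statement's English description precedes it below -/
import Mathlib

section
/- For nonnegative integers n, a, b with a ≥ b and a - b ≥ 0, the alternating sum ∑_{k=0}^{n} (n choose k) (-1)^k (a+k)!/(b+k)! equals (-1)^n (a-b)! a! / ((a-b-n)! (b+n)!), where the right-hand side is interpreted as 0 when a - b - n < 0. -/
open Finset Nat

noncomputable def altS (n a b : ℕ) : ℝ :=
  ∑ k ∈ range (n + 1),
    (n.choose k : ℝ) * (-1) ^ k * (factorial (a + k) : ℝ) / (factorial (b + k) : ℝ)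

lemma altS_succ (n a b : ℕ) : altS (n + 1) a b = altS n a b - altS n (a + 1) (b + 1) := by
  unfold altS
  rw [Finset.sum_range_succ'  (fun k => ((n+1).choose k : ℝ) * (-1) ^ k * (factorial (a + k) : ℝ) / (factorial (b + k) : ℝ)) (n+1)]
  have h1 : ∀ j, ((n+1).choose (j+1) : ℝ) = (n.choose j : ℝ) + (n.choose (j+1) : ℝ) := by
    intro j
    rw [Nat.choose_succ_succ]
    push_cast
    ring
  have split : ∀ j ∈ range (n+1),
      ((n+1).choose (j+1) : ℝ) * (-1) ^ (j+1) * (factorial (a + (j+1)) : ℝ) / (factorial (b + (j+1)) : ℝ)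
      = -( (n.choose j : ℝ) * (-1) ^ j * (factorial ((a+1) + j) : ℝ) / (factorial ((b+1) + j) : ℝ))
        + (n.choose (j+1) : ℝ) * (-1) ^ (j+1) * (factorial (a + (j+1)) : ℝ) / (factorial (b + (j+1)) : ℝ) := by
    intro j _
    rw [h1 j]
    have e1 : a + (j+1) = (a+1) + j := by ring
    have e2 : b + (j+1) = (b+1) + j := by ring
    rw [e1, e2]
    ring
  rw [Finset.sum_congr rfl split, Finset.sum_add_distrib, Finset.sum_neg_distrib]
  have hlast : ∑ j ∈ range (n+1),
      (n.choose (j+1) : ℝ) * (-1) ^ (j+1) * (factorial (a + (j+1)) : ℝ) / (factorial (b + (j+1)) : ℝ)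
      + ((n+1).choose 0 : ℝ) * (-1)^0 * (factorial (a + 0) : ℝ) / (factorial (b + 0) : ℝ)
      = ∑ k ∈ range (n+1), (n.choose k : ℝ) * (-1) ^ k * (factorial (a + k) : ℝ) / (factorial (b + k) : ℝ) := by
    have := Finset.sum_range_succ' (fun k => (n.choose k : ℝ) * (-1) ^ k * (factorial (a + k) : ℝ) / (factorial (b + k) : ℝ)) (n+1)
    simp only [Nat.choose_self, Nat.choose_zero_right] at *
    rw [Finset.sum_range_succ] at this
    simp [Nat.choose_succ_self] at this
    simp only [Nat.cast_one, pow_zero, one_mul, add_zero, mul_one] at this ⊢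
    linarith [this]
  linarith [hlast]

/-- Alternating factorial-ratio sum identity: for `b ≤ a`,
`∑_{k=0}^n C(n,k) (-1)^k (a+k)!/(b+k)! = (-1)^n (a-b)! a! / ((a-b-n)! (b+n)!)`,
the right-hand side being `0` when `n > a - b` (Gamma-function convention). -/
theorem alternating_factorial_sum (n a b : ℕ) (hba : b ≤ a) :
    ∑ k ∈ range (n + 1),
      (n.choose k : ℝ) * (-1) ^ k * (factorial (a + k) : ℝ) / (factorial (b + k) : ℝ) =
    if n ≤ a - b then
      (-1 : ℝ) ^ n * (factorial (a - b) : ℝ) * (factorial a : ℝ) /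
        ((factorial (a - b - n) : ℝ) * (factorial (b + n) : ℝ))
    else 0 := by
  have key : ∀ m x y : ℕ, y ≤ x → altS m x y =
      (if m ≤ x - y then
        (-1 : ℝ) ^ m * (factorial (x - y) : ℝ) * (factorial x : ℝ) /
          ((factorial (x - y - m) : ℝ) * (factorial (y + m) : ℝ))
      else 0) := by
    intro m
    induction m with
    | zero =>
      intro x y hxy
      have h0 : (0:ℕ) ≤ x - y := Nat.zero_le _
      simp only [altS, if_pos h0]
      rw [Finset.sum_range_one]
      have hne : ((factorial (x - y)) : ℝ) ≠ 0 := by positivity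
      have hne2 : ((factorial y) : ℝ) ≠ 0 := by positivity
      simp only [Nat.choose_zero_right, pow_zero, Nat.sub_zero, add_zero]
      field_simp
      ring
    | succ m ih =>
      intro x y hxy
      rw [altS_succ, ih x y hxy, ih (x+1) (y+1) (by omega)]
      have hd : x + 1 - (y + 1) = x - y := by omega
      rw [hd]
      by_cases h : m + 1 ≤ x - y
      · have hm : m ≤ x - y := by omega
        rw [if_pos h, if_pos hm, if_pos hm]
        have e1 : x - y - m = (x - y - (m+1)) + 1 := by omega
        have e2 : y + (m + 1) = (y + m) + 1 := by omega
        have e3 : y + 1 + m = (y + m) + 1 := by omega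
        rw [e1, e2, e3, factorial_succ, factorial_succ, factorial_succ]
        have hc1 : (((x - y - (m+1)) : ℕ) : ℝ) + 1 = (x:ℝ) - y - m := by
          have h5 : ((x - y - (m+1) + 1 : ℕ) : ℝ) = ((x - (y + m) : ℕ) : ℝ) := by
            congr 1; omega
          push_cast [Nat.cast_sub (show y + m ≤ x by omega)] at h5
          linarith
        push_cast
        rw [hc1]
        have h1 : ((factorial (x - y - (m+1))) : ℝ) ≠ 0 := by positivity
        have h2 : ((factorial (y + m)) : ℝ) ≠ 0 := by positivity
        have h3 : ((x:ℝ) - y - m) ≠ 0 := by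
          have h6 : (m:ℝ) < ((x - y : ℕ) : ℝ) := Nat.cast_lt.mpr (by omega)
          rw [Nat.cast_sub hxy] at h6
          linarith
        have h4 : ((y:ℝ) + m + 1) ≠ 0 := by positivity
        field_simp
        ring
      · by_cases h2 : m ≤ x - y
        · have hmd : m = x - y := by omega
          rw [if_neg h, if_pos h2, if_pos h2]
          have e0 : x - y - m = 0 := by omega
          have eA : y + m = x := by omega
          have eB : y + 1 + m = x + 1 := by omega
          rw [e0, eA, eB]
          have hx : ((factorial x) : ℝ) ≠ 0 := by positivity
          have hx1 : ((factorial (x+1)) : ℝ) ≠ 0 := by positivity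
          simp [factorial]
          field_simp
          ring
        · rw [if_neg h, if_neg h2, if_neg h2]
          ring
  simpa [altS] using key n a b hba
end

section
/- For any function F from finite tuples of positive integers to a commutative ring that is invariant under permutations of the index values (i.e., F(a_1,...,a_n) depends only on the partition of {1,...,n} induced by equalities among the a_i), the sum ∑_{m=1}^{n} ((-1)^{m-1}/m) ∑'_{1 ≤ a_1,...,a_n ≤ m} F(a_1,...,a_n), where the primed sum is over tuples with {a_1,...,a_n} = {1,...,m}, equals ∑_{1 ≤ a_1,...,a_n ≤ n} (-1)^{m(a)-1} (m(a)-1)! (n-m(a))! / n! · F(a_1,...,a_n), where m(a) = |{a_1,...,a_n}|. -/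
open Finset Nat

lemma fiber_reindex (n m : ℕ) (F : (Fin n → ℕ) → ℝ)
    (hF : ∀ a b : Fin n → ℕ, (∀ i j, a i = a j ↔ b i = b j) → F a = F b)
    (S : Finset ℕ) (hS : S ⊆ Icc 1 n) (hm : S.card = m) :
    ∑ a ∈ (Fintype.piFinset fun _ : Fin n => Icc 1 n).filter
        (fun a => Finset.image a Finset.univ = S), F a
    = ∑ a ∈ (Fintype.piFinset fun _ : Fin n => Icc 1 m).filter
        (fun a => Finset.image a Finset.univ = Icc 1 m), F a := by
  classical
  set e := S.orderIsoOfFin hm with he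
  set r : ℕ → ℕ := fun x => if h : x ∈ S then ((e.symm ⟨x, h⟩ : Fin m) : ℕ) + 1 else 0 with hr
  set s : ℕ → ℕ := fun x => if h : x - 1 < m then ((e ⟨x - 1, h⟩ : ℕ)) else 0 with hs
  have hrmem : ∀ x ∈ S, r x ∈ Icc 1 m := by
    intro x hx
    simp only [hr, dif_pos hx, mem_Icc]
    exact ⟨Nat.le_add_left 1 _, Nat.succ_le_of_lt (e.symm ⟨x, hx⟩).isLt⟩
  have hsmem : ∀ x ∈ Icc 1 m, s x ∈ S := by
    intro x hx
    rw [mem_Icc] at hx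
    have h1 : x - 1 < m := by omega
    simp only [hs, dif_pos h1]
    exact (e ⟨x - 1, h1⟩).2
  have hsr : ∀ x ∈ S, s (r x) = x := by
    intro x hx
    have hx' : r x = ((e.symm ⟨x, hx⟩ : Fin m) : ℕ) + 1 := by simp [hr, dif_pos hx]
    rw [hx']
    have h1 : ((e.symm ⟨x, hx⟩ : Fin m) : ℕ) + 1 - 1 < m := by
      simp
    simp only [hs, dif_pos h1]
    have : (⟨((e.symm ⟨x, hx⟩ : Fin m) : ℕ) + 1 - 1, h1⟩ : Fin m) = e.symm ⟨x, hx⟩ := by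
      ext; simp
    rw [this]
    simp
  have hrs : ∀ x ∈ Icc 1 m, r (s x) = x := by
    intro x hx
    rw [mem_Icc] at hx
    have h1 : x - 1 < m := by omega
    have hx' : s x = (e ⟨x - 1, h1⟩ : ℕ) := by simp [hs, dif_pos h1]
    have hmem : s x ∈ S := by rw [hx']; exact (e ⟨x - 1, h1⟩).2
    rw [hr]
    simp only [dif_pos hmem]
    have : (⟨s x, hmem⟩ : {y // y ∈ S}) = e ⟨x - 1, h1⟩ := by
      ext; simp [hx']
    rw [this, OrderIso.symm_apply_apply]
    simp
    omega
  refine Finset.sum_bij' (fun a _ => r ∘ a) (fun b _ => s ∘ b) ?_ ?_ ?_ ?_ ?_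
  · intro a ha
    simp only [mem_filter, Fintype.mem_piFinset] at ha ⊢
    obtain ⟨ha1, ha2⟩ := ha
    have hain : ∀ i, a i ∈ S := by
      intro i; rw [← ha2]; exact mem_image_of_mem a (mem_univ i)
    constructor
    · intro i; exact hrmem _ (hain i)
    · apply Finset.Subset.antisymm
      · intro y hy
        simp only [mem_image, mem_univ, true_and] at hy
        obtain ⟨i, rfl⟩ := hy
        exact hrmem _ (hain i)
      · intro y hy
        have : s y ∈ S := hsmem y hy
        rw [← ha2] at this
        simp only [mem_image, mem_univ, true_and] at this
        obtain ⟨i, hi⟩ := this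
        simp only [mem_image, mem_univ, true_and]
        exact ⟨i, by simp [Function.comp, hi, hrs y hy]⟩
  · intro b hb
    simp only [mem_filter, Fintype.mem_piFinset] at hb ⊢
    obtain ⟨hb1, hb2⟩ := hb
    have hbin : ∀ i, b i ∈ Icc 1 m := by
      intro i; rw [← hb2]; exact mem_image_of_mem b (mem_univ i)
    constructor
    · intro i; exact hS (hsmem _ (hbin i))
    · apply Finset.Subset.antisymm
      · intro y hy
        simp only [mem_image, mem_univ, true_and] at hy
        obtain ⟨i, rfl⟩ := hy
        exact hsmem _ (hbin i)
      · intro x hx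
        have : r x ∈ Icc 1 m := hrmem x hx
        rw [← hb2] at this
        simp only [mem_image, mem_univ, true_and] at this
        obtain ⟨i, hi⟩ := this
        simp only [mem_image, mem_univ, true_and]
        exact ⟨i, by simp [Function.comp, hi, hsr x hx]⟩
  · intro a ha
    simp only [mem_filter, Fintype.mem_piFinset] at ha
    obtain ⟨ha1, ha2⟩ := ha
    have hain : ∀ i, a i ∈ S := by
      intro i; rw [← ha2]; exact mem_image_of_mem a (mem_univ i)
    funext i
    exact hsr _ (hain i)
  · intro b hb
    simp only [mem_filter, Fintype.mem_piFinset] at hb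
    obtain ⟨hb1, hb2⟩ := hb
    have hbin : ∀ i, b i ∈ Icc 1 m := by
      intro i; rw [← hb2]; exact mem_image_of_mem b (mem_univ i)
    funext i
    exact hrs _ (hbin i)
  · intro a ha
    simp only [mem_filter, Fintype.mem_piFinset] at ha
    obtain ⟨ha1, ha2⟩ := ha
    have hain : ∀ i, a i ∈ S := by
      intro i; rw [← ha2]; exact mem_image_of_mem a (mem_univ i)
    apply hF
    intro i j
    constructor
    · intro h; simp [Function.comp, h]
    · intro h
      have := congrArg s h
      simpa [hsr _ (hain i), hsr _ (hain j)] using this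


/-- Combinatorial re-summation of restricted (surjective-image) replica sums into a
single unrestricted sum with an `m`-dependent weight.  `F` is a function of tuples of
positive integers that depends only on the partition induced by equalities among the
entries (invariance under relabelling). -/
theorem replica_resummation (n : ℕ) (hn : 1 ≤ n) (F : (Fin n → ℕ) → ℝ)
    (hF : ∀ a b : Fin n → ℕ, (∀ i j, a i = a j ↔ b i = b j) → F a = F b) :
    ∑ m ∈ Icc 1 n, ((-1 : ℝ) ^ (m - 1) / m) *
      ∑ a ∈ (Fintype.piFinset fun _ : Fin n => Icc 1 m).filter
        (fun a => Finset.image a Finset.univ = Icc 1 m), F a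
    = ∑ a ∈ Fintype.piFinset (fun _ : Fin n => Icc 1 n),
        ((-1 : ℝ) ^ ((Finset.image a Finset.univ).card - 1) *
          (factorial ((Finset.image a Finset.univ).card - 1) : ℝ) *
          (factorial (n - (Finset.image a Finset.univ).card) : ℝ) /
          (factorial n : ℝ)) * F a := by

  classical
  set T : ℕ → ℝ := fun m => ∑ a ∈ (Fintype.piFinset fun _ : Fin n => Icc 1 m).filter
      (fun a => Finset.image a Finset.univ = Icc 1 m), F a with hT
  set w : ℕ → ℝ := fun m => (-1 : ℝ) ^ (m - 1) * (factorial (m - 1) : ℝ) *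
      (factorial (n - m) : ℝ) / (factorial n : ℝ) with hw
  -- Step 1: group RHS by image
  have hmaps : ∀ a ∈ Fintype.piFinset (fun _ : Fin n => Icc 1 n),
      Finset.image a Finset.univ ∈ (Icc 1 n).powerset := by
    intro a ha
    rw [Fintype.mem_piFinset] at ha
    rw [mem_powerset]
    intro y hy
    simp only [mem_image, mem_univ, true_and] at hy
    obtain ⟨i, rfl⟩ := hy
    exact ha i
  rw [← Finset.sum_fiberwise_of_maps_to hmaps
    (fun a => ((-1 : ℝ) ^ ((Finset.image a Finset.univ).card - 1) *
          (factorial ((Finset.image a Finset.univ).card - 1) : ℝ) *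
          (factorial (n - (Finset.image a Finset.univ).card) : ℝ) /
          (factorial n : ℝ)) * F a)]
  -- Step 2: each fiber sum equals w(|S|) * T(|S|)
  have hfiber : ∀ S ∈ (Icc 1 n).powerset,
      (∑ a ∈ (Fintype.piFinset fun _ : Fin n => Icc 1 n).filter
        (fun a => Finset.image a Finset.univ = S),
        ((-1 : ℝ) ^ ((Finset.image a Finset.univ).card - 1) *
          (factorial ((Finset.image a Finset.univ).card - 1) : ℝ) *
          (factorial (n - (Finset.image a Finset.univ).card) : ℝ) /
          (factorial n : ℝ)) * F a)
      = w S.card * T S.card := by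
    intro S hS
    rw [mem_powerset] at hS
    have step1 : (∑ a ∈ (Fintype.piFinset fun _ : Fin n => Icc 1 n).filter
        (fun a => Finset.image a Finset.univ = S),
        ((-1 : ℝ) ^ ((Finset.image a Finset.univ).card - 1) *
          (factorial ((Finset.image a Finset.univ).card - 1) : ℝ) *
          (factorial (n - (Finset.image a Finset.univ).card) : ℝ) /
          (factorial n : ℝ)) * F a)
        = w S.card * ∑ a ∈ (Fintype.piFinset fun _ : Fin n => Icc 1 n).filter
          (fun a => Finset.image a Finset.univ = S), F a := by
      rw [mul_sum]
      apply Finset.sum_congr rfl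
      intro a ha
      rw [mem_filter] at ha
      rw [ha.2, hw]
    rw [step1, fiber_reindex n S.card F hF S hS rfl]
  rw [Finset.sum_congr rfl hfiber]
  -- Step 3: sum over powerset = sum over cardinalities
  rw [Finset.sum_powerset (Icc 1 n) (fun S => w S.card * T S.card)]
  have hcard : (Icc 1 n).card = n := by simp
  rw [hcard]
  have hinner : ∀ m ∈ range (n + 1),
      (∑ S ∈ powersetCard m (Icc 1 n), w S.card * T S.card)
      = (n.choose m : ℝ) * (w m * T m) := by
    intro m _
    rw [Finset.sum_congr rfl (fun S hS => by
      rw [(Finset.mem_powersetCard.mp hS).2]), Finset.sum_const, card_powersetCard, hcard,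
      nsmul_eq_mul]
  rw [Finset.sum_congr rfl hinner]
  -- Step 4: split off m = 0 and identify
  have hsplit : range (n + 1) = insert 0 (Icc 1 n) := by
    ext x; simp [Nat.lt_succ_iff]; omega
  rw [hsplit, Finset.sum_insert (by simp)]
  have hT0 : T 0 = 0 := by
    have hempty : (Fintype.piFinset fun _ : Fin n => Icc 1 (0:ℕ)) = ∅ := by
      rw [Finset.eq_empty_iff_forall_notMem]
      intro a ha
      rw [Fintype.mem_piFinset] at ha
      have := ha ⟨0, hn⟩
      simp at this
    have hne : (univ : Finset (Fin n)) ≠ ∅ := by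
      rw [← Finset.nonempty_iff_ne_empty]
      exact ⟨⟨0, hn⟩, mem_univ _⟩
    rw [hT]
    simp [hempty, hne]
  rw [hT0, mul_zero, mul_zero, zero_add]
  apply Finset.sum_congr rfl
  intro m hm
  rw [mem_Icc] at hm
  obtain ⟨hm1, hm2⟩ := hm
  have keyN : n.choose m * (m * (m-1)!) * (n-m)! = n ! := by
    rw [Nat.mul_factorial_pred (by omega : m ≠ 0)]
    exact Nat.choose_mul_factorial_mul_factorial hm2
  have key : (n.choose m : ℝ) * (m * ((m-1)! : ℕ)) * ((n-m)! : ℕ) = (n ! : ℕ) := by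
    exact_mod_cast congrArg (Nat.cast : ℕ → ℝ) keyN
  have hn0 : ((n ! : ℕ) : ℝ) ≠ 0 := Nat.cast_ne_zero.mpr (Nat.factorial_ne_zero n)
  have hm0 : (m : ℝ) ≠ 0 := Nat.cast_ne_zero.mpr (by omega)
  have hcoef : (n.choose m : ℝ) * w m = (-1 : ℝ) ^ (m - 1) / m := by
    rw [hw, ← mul_div_assoc, div_eq_div_iff hn0 hm0]
    linear_combination ((-1:ℝ)^(m-1)) * key
  calc ((-1 : ℝ) ^ (m - 1) / m) * T m = ((n.choose m : ℝ) * w m) * T m := by rw [hcoef]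
    _ = (n.choose m : ℝ) * (w m * T m) := by ring
end

section
/- Let q : Σ × Σ → [-1,1] be symmetric with q(τ,τ) = 1, let ⟨·⟩ denote a quenched replicated expectation symmetric under permutations of replicas, and define for n ≥ 1: E_n = (1/(2^n (2n)! n!)) ∑_{1 ≤ a_1,...,a_{2n} ≤ 2n} (-1)^m (m-1)!(2n-m)! ⟨q²_{a_1a_2}···q²_{a_{2n-1}a_{2n}}⟩ where m = |{a_1,...,a_{2n}}|. Then for n ≥ 2, the summands where a_{2j-1} = a_{2j} for some j contribute zero in total, so the sum may be restricted to tuples with a_1 ≠ a_2, a_3 ≠ a_4, ..., a_{2n-1} ≠ a_{2n}. -/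
open Finset Nat

namespace SKAux

variable {n : ℕ}

def rho (j : Fin n) (b : Fin (2*n)) (a : Fin n × Fin 2 → Fin (2*n)) :
    Fin n × Fin 2 → Fin (2*n) := fun p => if p.1 = j then b else a p

lemma rho_pair (j : Fin n) (b) (a) (k : Fin 2) : rho j b a (j, k) = b := by simp [rho]

lemma rho_ne (j : Fin n) (b) (a) {p : Fin n × Fin 2} (h : p.1 ≠ j) : rho j b a p = a p := by
  simp [rho, h]

lemma image_rho (j : Fin n) (b) (a) :
    Finset.image (rho j b a) Finset.univ
      = insert b (Finset.image a (Finset.univ.filter fun p => p.1 ≠ j)) := by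
  ext x
  simp only [Finset.mem_image, Finset.mem_insert, Finset.mem_univ, true_and,
    Finset.mem_filter]
  constructor
  · rintro ⟨p, rfl⟩
    by_cases h : p.1 = j
    · left; simp [rho, h]
    · right; exact ⟨p, h, (rho_ne j b a h).symm⟩
  · rintro (rfl | ⟨p, h, rfl⟩)
    · exact ⟨(j, 0), rho_pair j x a 0⟩
    · exact ⟨p, rho_ne j b a h⟩

lemma weight_sum (n : ℕ) (s : Finset (Fin (2*n))) (h1 : 1 ≤ s.card) (h2 : s.card ≤ 2*n - 2) :
    ∑ b : Fin (2*n), ((-1:ℝ) ^ (insert b s).card * (factorial ((insert b s).card - 1) : ℝ) *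
      (factorial (2*n - (insert b s).card) : ℝ)) = 0 := by
  rw [← Finset.sum_add_sum_compl s]
  have A : ∑ b ∈ s, ((-1:ℝ) ^ (insert b s).card * (factorial ((insert b s).card - 1) : ℝ) *
      (factorial (2*n - (insert b s).card) : ℝ))
      = (s.card : ℝ) * ((-1:ℝ)^s.card * (factorial (s.card - 1) : ℝ) *
        (factorial (2*n - s.card) : ℝ)) := by
    rw [Finset.sum_congr rfl (fun b hb => by rw [Finset.insert_eq_self.2 hb]),
      Finset.sum_const, nsmul_eq_mul]
  have B : ∑ b ∈ sᶜ, ((-1:ℝ) ^ (insert b s).card * (factorial ((insert b s).card - 1) : ℝ) *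
      (factorial (2*n - (insert b s).card) : ℝ))
      = ((2*n - s.card : ℕ) : ℝ) * ((-1:ℝ)^(s.card+1) * (factorial s.card : ℝ) *
        (factorial (2*n - (s.card+1)) : ℝ)) := by
    rw [Finset.sum_congr rfl (fun b hb => by
        rw [Finset.card_insert_of_notMem (Finset.mem_compl.1 hb), Nat.add_sub_cancel]),
      Finset.sum_const, nsmul_eq_mul, Finset.card_compl, Fintype.card_fin]
  rw [A, B]
  obtain ⟨k, hk⟩ : ∃ k, s.card = k + 1 := ⟨s.card - 1, by omega⟩
  obtain ⟨l, hl⟩ : ∃ l, 2*n - s.card = l + 1 := ⟨2*n - s.card - 1, by omega⟩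
  have hl2 : 2*n - (s.card + 1) = l := by omega
  rw [hk] at hl hl2 ⊢
  rw [hl, hl2, Nat.add_sub_cancel, factorial_succ k, factorial_succ l]
  push_cast
  ring

lemma bad_sum (n : ℕ) (hn : 2 ≤ n) (S : Type*) (q : S → S → ℝ) (hq1 : ∀ x, q x x = 1)
    (E : ((Fin (2 * n) → S) → ℝ) → ℝ) :
    ∑ a ∈ Finset.univ.filter (fun a : Fin n × Fin 2 → Fin (2*n) =>
        ¬ ∀ j : Fin n, a (j, 0) ≠ a (j, 1)),
      ((-1 : ℝ) ^ (Finset.image a Finset.univ).card *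
        (factorial ((Finset.image a Finset.univ).card - 1) : ℝ) *
        (factorial (2 * n - (Finset.image a Finset.univ).card) : ℝ)) *
        E (fun τ => ∏ j : Fin n, (q (τ (a (j, 0))) (τ (a (j, 1)))) ^ 2) = 0 := by
  classical
  set F : (Fin n × Fin 2 → Fin (2*n)) → ℝ := fun a =>
    ((-1 : ℝ) ^ (Finset.image a Finset.univ).card *
        (factorial ((Finset.image a Finset.univ).card - 1) : ℝ) *
        (factorial (2 * n - (Finset.image a Finset.univ).card) : ℝ)) *
        E (fun τ => ∏ j : Fin n, (q (τ (a (j, 0))) (τ (a (j, 1)))) ^ 2) with hF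
  set T : (Fin n × Fin 2 → Fin (2*n)) → Finset (Fin n) := fun a =>
    Finset.univ.filter (fun j => a (j, 0) = a (j, 1)) with hT
  have hT_ne : ∀ a : Fin n × Fin 2 → Fin (2*n),
      (¬ ∀ j : Fin n, a (j, 0) ≠ a (j, 1)) ↔ (T a).Nonempty := by
    intro a
    push_neg
    constructor
    · rintro ⟨j, hj⟩; exact ⟨j, by simp [hT, hj]⟩
    · rintro ⟨j, hj⟩; exact ⟨j, by simpa [hT] using hj⟩
  set g : (Fin n × Fin 2 → Fin (2*n)) → Fin n := fun a =>
    if h : (T a).Nonempty then (T a).min' h else ⟨0, by omega⟩ with hg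
  set bad := Finset.univ.filter (fun a : Fin n × Fin 2 → Fin (2*n) =>
        ¬ ∀ j : Fin n, a (j, 0) ≠ a (j, 1)) with hbad
  rw [← Finset.sum_fiberwise_of_maps_to (g := g) (t := Finset.univ)
      (fun a _ => Finset.mem_univ (g a))]
  refine Finset.sum_eq_zero fun j _ => ?_
  have hmem_diag : ∀ a ∈ bad.filter (fun a => g a = j), a (j, 0) = a (j, 1) := by
    intro a ha
    rw [Finset.mem_filter] at ha
    obtain ⟨ha1, ha2⟩ := ha
    rw [hbad, Finset.mem_filter] at ha1
    have hne : (T a).Nonempty := (hT_ne a).1 ha1.2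
    have hmin : g a ∈ T a := by rw [hg]; simp only [hne, dif_pos]; exact Finset.min'_mem _ hne
    rw [ha2] at hmin
    simpa [hT] using hmin
  have hTrho : ∀ (b) (a), a (j, 0) = a (j, 1) → T (rho j b a) = T a := by
    intro b a ha
    ext j'
    by_cases h : j' = j
    · subst h; simp [hT, rho_pair, ha]
    · simp only [hT, Finset.mem_filter, Finset.mem_univ, true_and]
      rw [rho_ne j b a (show ((j', (0:Fin 2)) : Fin n × Fin 2).1 ≠ j from h),
        rho_ne j b a (show ((j', (1:Fin 2)) : Fin n × Fin 2).1 ≠ j from h)]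
  have hrho_mem : ∀ (b) (a), a ∈ bad.filter (fun a => g a = j) →
      rho j b a ∈ bad.filter (fun a => g a = j) := by
    intro b a ha
    have hd := hmem_diag a ha
    have hTeq := hTrho b a hd
    rw [Finset.mem_filter] at ha ⊢
    obtain ⟨ha1, ha2⟩ := ha
    rw [hbad, Finset.mem_filter] at ha1 ⊢
    refine ⟨⟨Finset.mem_univ _, ?_⟩, ?_⟩
    · rw [hT_ne, hTeq]; exact (hT_ne a).1 ha1.2
    · rw [hg] at ha2 ⊢; simp only [hTeq]; exact ha2
  have hz : (0 : ℕ) < 2 * n := by omega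
  set z : Fin (2*n) := ⟨0, hz⟩ with hzdef
  rw [← Finset.sum_fiberwise_of_maps_to (g := rho j z)
      (t := Finset.image (rho j z) (bad.filter (fun a => g a = j)))
      (fun a ha => Finset.mem_image_of_mem _ ha)]
  refine Finset.sum_eq_zero fun c hc => ?_
  obtain ⟨a₀, ha₀, rfl⟩ := Finset.mem_image.1 hc
  have hfiber : (bad.filter (fun a => g a = j)).filter (fun a => rho j z a = rho j z a₀)
      = Finset.image (fun b => rho j b a₀) Finset.univ := by
    ext a
    simp only [Finset.mem_filter, Finset.mem_image, Finset.mem_univ, true_and]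
    constructor
    · rintro ⟨ha, heq⟩
      refine ⟨a (j, 0), ?_⟩
      funext p
      obtain ⟨j', k⟩ := p
      by_cases h : j' = j
      · subst h
        rw [rho_pair]
        fin_cases k
        · rfl
        · exact hmem_diag a (Finset.mem_filter.2 ha)
      · rw [rho_ne j _ a₀ (show ((j', k) : Fin n × Fin 2).1 ≠ j from h)]
        have h1 : rho j z a (j', k) = a (j', k) :=
          rho_ne j z a (show ((j', k) : Fin n × Fin 2).1 ≠ j from h)
        have h2 : rho j z a₀ (j', k) = a₀ (j', k) :=
          rho_ne j z a₀ (show ((j', k) : Fin n × Fin 2).1 ≠ j from h)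
        rw [← h2, ← heq, h1]
    · rintro ⟨b, rfl⟩
      refine ⟨Finset.mem_filter.1 (hrho_mem b a₀ ha₀), ?_⟩
      funext p
      by_cases h : p.1 = j
      · obtain ⟨j', k⟩ := p; subst h; rw [rho_pair, rho_pair]
      · rw [rho_ne j z _ h, rho_ne j b a₀ h, rho_ne j z a₀ h]
  rw [hfiber, Finset.sum_image (fun b _ b' _ h => by
      have := congrFun h (j, 0); rwa [rho_pair, rho_pair] at this)]
  -- now : ∑ b, F (rho j b a₀) = 0
  set s : Finset (Fin (2*n)) := Finset.image a₀ (Finset.univ.filter fun p => p.1 ≠ j) with hs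
  have hEconst : ∀ b, (fun τ : Fin (2*n) → S =>
        ∏ i : Fin n, (q (τ (rho j b a₀ (i, 0))) (τ (rho j b a₀ (i, 1)))) ^ 2)
      = (fun τ : Fin (2*n) → S =>
        ∏ i : Fin n, (if i = j then 1 else (q (τ (a₀ (i, 0))) (τ (a₀ (i, 1)))) ^ 2)) := by
    intro b
    funext τ
    refine Finset.prod_congr rfl fun i _ => ?_
    by_cases h : i = j
    · subst h; rw [rho_pair, rho_pair, hq1, if_pos rfl, one_pow]
    · rw [rho_ne j b a₀ (show ((i, (0:Fin 2)) : Fin n × Fin 2).1 ≠ j from h),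
        rho_ne j b a₀ (show ((i, (1:Fin 2)) : Fin n × Fin 2).1 ≠ j from h), if_neg h]
  have hFrho : ∀ b, F (rho j b a₀)
      = ((-1 : ℝ) ^ (insert b s).card * (factorial ((insert b s).card - 1) : ℝ) *
        (factorial (2 * n - (insert b s).card) : ℝ)) *
        E (fun τ : Fin (2*n) → S =>
          ∏ i : Fin n, (if i = j then 1 else (q (τ (a₀ (i, 0))) (τ (a₀ (i, 1)))) ^ 2)) := by
    intro b
    rw [hF]
    simp only
    rw [image_rho, hEconst b, ← hs]
  rw [Finset.sum_congr rfl (fun b _ => hFrho b), ← Finset.sum_mul]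
  have hj' : ∃ j' : Fin n, j' ≠ j := by
    rcases Nat.lt_or_ge 0 j.val with h | h
    · exact ⟨⟨0, by omega⟩, fun he => by simp [Fin.ext_iff] at he; omega⟩
    · exact ⟨⟨1, by omega⟩, fun he => by simp [Fin.ext_iff] at he; omega⟩
  obtain ⟨j', hj'⟩ := hj'
  have h1 : 1 ≤ s.card := by
    refine Finset.card_pos.2 ⟨a₀ (j', 0), ?_⟩
    rw [hs]
    exact Finset.mem_image_of_mem _ (Finset.mem_filter.2 ⟨Finset.mem_univ _, hj'⟩)
  have hfilt : (Finset.univ.filter fun p : Fin n × Fin 2 => p.1 ≠ j)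
      = ({j}ᶜ : Finset (Fin n)) ×ˢ (Finset.univ : Finset (Fin 2)) := by
    ext p; simp [Finset.mem_product]
  have h2 : s.card ≤ 2*n - 2 := by
    rw [hs, hfilt]
    calc (Finset.image a₀ (({j}ᶜ : Finset (Fin n)) ×ˢ (Finset.univ : Finset (Fin 2)))).card
        ≤ (({j}ᶜ : Finset (Fin n)) ×ˢ (Finset.univ : Finset (Fin 2))).card :=
          Finset.card_image_le
      _ = (n - 1) * 2 := by
          rw [Finset.card_product, Finset.card_compl]
          simp
      _ ≤ 2 * n - 2 := by omega
  rw [weight_sum n s h1 h2, zero_mul]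


end SKAux

/-- In the SK energy expansion coefficient
`E_n = (1/(2^n (2n)! n!)) ∑_a (-1)^m (m-1)!(2n-m)! ⟨q²_{a₁a₂}⋯q²_{a_{2n-1}a_{2n}}⟩`
(with `m` the number of distinct replica indices), for `n ≥ 2` the summands with a
repeated index inside some pair contribute zero in total, so the sum may be restricted
to tuples with `a₁ ≠ a₂, a₃ ≠ a₄, …`.  Here `⟨·⟩ = E` is a replica-permutation
invariant expectation and `q` a symmetric overlap kernel with `q(τ,τ) = 1`. -/
theorem restrict_to_offdiagonal_pairs (n : ℕ) (hn : 2 ≤ n) (S : Type*)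
    (q : S → S → ℝ) (hqsymm : ∀ x y, q x y = q y x) (hq1 : ∀ x, q x x = 1)
    (E : ((Fin (2 * n) → S) → ℝ) → ℝ)
    (hE : ∀ (π : Equiv.Perm (Fin (2 * n))) (f : (Fin (2 * n) → S) → ℝ),
      E (fun τ => f (τ ∘ π)) = E f) :
    ∑ a : Fin n × Fin 2 → Fin (2 * n),
      ((-1 : ℝ) ^ (Finset.image a Finset.univ).card *
        (factorial ((Finset.image a Finset.univ).card - 1) : ℝ) *
        (factorial (2 * n - (Finset.image a Finset.univ).card) : ℝ)) *
        E (fun τ => ∏ j : Fin n, (q (τ (a (j, 0))) (τ (a (j, 1)))) ^ 2)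
    = ∑ a ∈ (Finset.univ : Finset (Fin n × Fin 2 → Fin (2 * n))).filter
        (fun a => ∀ j : Fin n, a (j, 0) ≠ a (j, 1)),
      ((-1 : ℝ) ^ (Finset.image a Finset.univ).card *
        (factorial ((Finset.image a Finset.univ).card - 1) : ℝ) *
        (factorial (2 * n - (Finset.image a Finset.univ).card) : ℝ)) *
        E (fun τ => ∏ j : Fin n, (q (τ (a (j, 0))) (τ (a (j, 1)))) ^ 2) := by
  classical
  rw [← Finset.sum_filter_add_sum_filter_not Finset.univ
      (fun a : Fin n × Fin 2 → Fin (2 * n) => ∀ j : Fin n, a (j, 0) ≠ a (j, 1))]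
  rw [SKAux.bad_sum n hn S q hq1 E, add_zero]
end

section
/- With A_s = ∑_{1≤a<b≤s} q²_{ab} − s ∑_{1≤a≤s} q²_{a,s+1} + (s(s+1)/2) q²_{s+1,s+2}, and for fixed replica indices a_1,...,a_{2(n-1)} all lying in {1,...,s}, the sum ∑_{1≤a<b≤2n} (-1)^m (m-1)!(2n-m)! Q q²_{ab}, where Q = q²_{a_1a_2}···q²_{a_{2n-3}a_{2n-2}} and m = |{a_1,...,a_{2n-2},a,b}|, equals (-1)^s (s-1)!(2n-s)! Q A_s, assuming the quenched expectation ⟨·⟩ is permutation-symmetric in replicas with indices > s and Q depends only on replicas 1,...,s. -/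
open Finset Nat

/-- Collapse of the sum over an extra replica pair into the Aizenman–Contucci factor
`A_s = ∑_{1≤a<b≤s} q²_{ab} − s ∑_{1≤a≤s} q²_{a,s+1} + (s(s+1)/2) q²_{s+1,s+2}`:
for fixed replica indices `a₁,…,a_{2(n-1)}` with value set exactly `{1,…,s}`,
`∑_{1≤a<b≤2n} (-1)^m (m-1)!(2n-m)! ⟨Q q²_{ab}⟩ = (-1)^s (s-1)!(2n-s)! ⟨Q A_s⟩`,
where `Q = q²_{a₁a₂}⋯q²_{a_{2n-3}a_{2n-2}}`, `m = |{a₁,…,a_{2n-2},a,b}|`, and the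
expectation `E = ⟨·⟩` is linear and invariant under permutations of the replica
labels fixing `1,…,s`. -/
theorem AC_factor_collapse (n s : ℕ) (hn : 2 ≤ n) (hs : 2 ≤ s)
    (hsn : s + 2 ≤ 2 * n) (S : Type*) (q : S → S → ℝ)
    (hqsymm : ∀ x y, q x y = q y x) (hq1 : ∀ x, q x x = 1)
    (E : ((ℕ → S) → ℝ) →ₗ[ℝ] ℝ)
    (hE : ∀ (π : Equiv.Perm ℕ), (∀ i ≤ s, π i = i) →
      ∀ f : (ℕ → S) → ℝ, E (fun τ => f (τ ∘ π)) = E f)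
    (a : Fin (n - 1) × Fin 2 → ℕ)
    (ha : Finset.image a Finset.univ = Icc 1 s) :
    ∑ c ∈ Icc 1 (2 * n), ∑ d ∈ Icc (c + 1) (2 * n),
      ((-1 : ℝ) ^ (Finset.image a Finset.univ ∪ {c, d}).card *
        (factorial ((Finset.image a Finset.univ ∪ {c, d}).card - 1) : ℝ) *
        (factorial (2 * n - (Finset.image a Finset.univ ∪ {c, d}).card) : ℝ)) *
        E (fun τ =>
          (∏ j : Fin (n - 1), (q (τ (a (j, 0))) (τ (a (j, 1)))) ^ 2) *
            (q (τ c) (τ d)) ^ 2)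
    = (-1 : ℝ) ^ s * (factorial (s - 1) : ℝ) * (factorial (2 * n - s) : ℝ) *
        E (fun τ =>
          (∏ j : Fin (n - 1), (q (τ (a (j, 0))) (τ (a (j, 1)))) ^ 2) *
            ((∑ c ∈ Icc 1 s, ∑ d ∈ Icc (c + 1) s, (q (τ c) (τ d)) ^ 2)
              - (s : ℝ) * ∑ c ∈ Icc 1 s, (q (τ c) (τ (s + 1))) ^ 2
              + ((s : ℝ) * (s + 1) / 2) * (q (τ (s + 1)) (τ (s + 2))) ^ 2)) := by
  have ha' : ∀ p, a p ∈ Icc 1 s := fun p => ha ▸ Finset.mem_image_of_mem a (mem_univ p)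
  -- F c d := E (Q · q(τ c)(τ d)²)
  set F : ℕ → ℕ → ℝ := fun c d => E (fun τ =>
      (∏ j : Fin (n - 1), (q (τ (a (j, 0))) (τ (a (j, 1)))) ^ 2) * (q (τ c) (τ d)) ^ 2)
    with hF
  -- permutation invariance of F
  have keyF : ∀ (π : Equiv.Perm ℕ), (∀ i ≤ s, π i = i) → ∀ c d, F (π c) (π d) = F c d := by
    intro π hπ c d
    simp only [hF]
    have := hE π hπ (fun τ =>
      (∏ j : Fin (n - 1), (q (τ (a (j, 0))) (τ (a (j, 1)))) ^ 2) * (q (τ c) (τ d)) ^ 2)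
    rw [← this]
    congr 1
    funext τ
    simp only [Function.comp_apply]
    congr 1
    refine Finset.prod_congr rfl fun j _ => ?_
    rw [hπ _ ((mem_Icc.mp (ha' (j, 0))).2), hπ _ ((mem_Icc.mp (ha' (j, 1))).2)]
  have key2 : ∀ c d, c ≤ s → s < d → F c d = F c (s + 1) := by
    intro c d hc hd
    rcases eq_or_ne d (s + 1) with rfl | hne
    · rfl
    have hπ : ∀ i ≤ s, Equiv.swap (s + 1) d i = i := fun i hi =>
      Equiv.swap_apply_of_ne_of_ne (by omega) (by omega)
    have := keyF (Equiv.swap (s + 1) d) hπ c (s + 1)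
    rw [Equiv.swap_apply_left, hπ c hc] at this
    exact this
  have key3 : ∀ c d, s < c → c < d → F c d = F (s + 1) (s + 2) := by
    intro c d hc hd
    set π : Equiv.Perm ℕ := (Equiv.swap (s + 2) d).trans (Equiv.swap (s + 1) c) with hπdef
    have hπ : ∀ i ≤ s, π i = i := by
      intro i hi
      simp only [hπdef, Equiv.trans_apply]
      rw [Equiv.swap_apply_of_ne_of_ne (show i ≠ s + 2 by omega) (show i ≠ d by omega),
        Equiv.swap_apply_of_ne_of_ne (show i ≠ s + 1 by omega) (show i ≠ c by omega)]
    have h1 : π (s + 1) = c := by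
      simp only [hπdef, Equiv.trans_apply]
      rw [Equiv.swap_apply_of_ne_of_ne (show s + 1 ≠ s + 2 by omega)
        (show s + 1 ≠ d by omega), Equiv.swap_apply_left]
    have h2 : π (s + 2) = d := by
      simp only [hπdef, Equiv.trans_apply]
      rw [Equiv.swap_apply_left, Equiv.swap_apply_of_ne_of_ne (show d ≠ s + 1 by omega)
        (show d ≠ c by omega)]
    have := keyF π hπ (s + 1) (s + 2)
    rw [h1, h2] at this
    exact this
  -- cardinalities
  have hcardB : (Icc 1 s).card = s := by rw [Nat.card_Icc]; omega
  have hcard1 : ∀ c d : ℕ, c ∈ Icc 1 s → d ∈ Icc 1 s →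
      (Icc 1 s ∪ ({c, d} : Finset ℕ)).card = s := by
    intro c d hc hd
    rw [Finset.union_eq_left.mpr (by
      intro x hx
      simp only [Finset.mem_insert, Finset.mem_singleton] at hx
      rcases hx with rfl | rfl
      exacts [hc, hd]), hcardB]
  have hcard2 : ∀ c d : ℕ, c ∈ Icc 1 s → d ∉ Icc 1 s →
      (Icc 1 s ∪ ({c, d} : Finset ℕ)).card = s + 1 := by
    intro c d hc hd
    have : Icc 1 s ∪ ({c, d} : Finset ℕ) = insert d (Icc 1 s) := by
      ext x
      simp only [Finset.mem_union, Finset.mem_insert, Finset.mem_singleton]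
      constructor
      · rintro (h | rfl | rfl)
        exacts [Or.inr h, Or.inr hc, Or.inl rfl]
      · rintro (rfl | h)
        exacts [Or.inr (Or.inr rfl), Or.inl h]
    rw [this, Finset.card_insert_of_notMem hd, hcardB]
  have hcard3 : ∀ c d : ℕ, c ∉ Icc 1 s → d ∉ Icc 1 s → c ≠ d →
      (Icc 1 s ∪ ({c, d} : Finset ℕ)).card = s + 2 := by
    intro c d hc hd hne
    have : Icc 1 s ∪ ({c, d} : Finset ℕ) = insert c (insert d (Icc 1 s)) := by
      ext x
      simp only [Finset.mem_union, Finset.mem_insert, Finset.mem_singleton]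
      tauto
    rw [this, Finset.card_insert_of_notMem (by
        simp only [Finset.mem_insert]
        push_neg
        exact ⟨hne, hc⟩),
      Finset.card_insert_of_notMem hd, hcardB]
  -- split sums
  have hsplit : Icc 1 (2 * n) = Icc 1 s ∪ Icc (s + 1) (2 * n) := by
    ext x; simp only [Finset.mem_Icc, Finset.mem_union]; omega
  have hdisj : Disjoint (Icc 1 s) (Icc (s + 1) (2 * n)) := by
    rw [Finset.disjoint_left]
    intro x hx hx'
    simp only [Finset.mem_Icc] at hx hx'
    omega
  rw [ha, hsplit, Finset.sum_union hdisj]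
  have hsplitIn : ∀ c ∈ Icc 1 s,
      Icc (c + 1) (2 * n) = Icc (c + 1) s ∪ Icc (s + 1) (2 * n) := by
    intro c hc
    simp only [Finset.mem_Icc] at hc
    ext x; simp only [Finset.mem_Icc, Finset.mem_union]; omega
  have hdisjIn : ∀ c : ℕ, Disjoint (Icc (c + 1) s) (Icc (s + 1) (2 * n)) := by
    intro c
    rw [Finset.disjoint_left]
    intro x hx hx'
    simp only [Finset.mem_Icc] at hx hx'
    omega
  -- abbreviations
  set X : ℝ := ∑ c ∈ Icc 1 s, ∑ d ∈ Icc (c + 1) s, F c d with hX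
  set Y : ℝ := ∑ c ∈ Icc 1 s, F c (s + 1) with hY
  set Z : ℝ := F (s + 1) (s + 2) with hZ
  -- the first sum
  have hL : ∑ c ∈ Icc 1 s, ∑ d ∈ Icc (c + 1) (2 * n),
      ((-1 : ℝ) ^ (Icc 1 s ∪ {c, d}).card *
        (factorial ((Icc 1 s ∪ {c, d}).card - 1) : ℝ) *
        (factorial (2 * n - (Icc 1 s ∪ {c, d}).card) : ℝ)) * F c d
      = ((-1 : ℝ) ^ s * (factorial (s - 1) : ℝ) * (factorial (2 * n - s) : ℝ)) * X
        + ((2 * n - s : ℕ) : ℝ) * ((-1 : ℝ) ^ (s + 1) * (factorial s : ℝ) *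
            (factorial (2 * n - s - 1) : ℝ)) * Y := by
    have step : ∀ c ∈ Icc 1 s, ∑ d ∈ Icc (c + 1) (2 * n),
        ((-1 : ℝ) ^ (Icc 1 s ∪ {c, d}).card *
          (factorial ((Icc 1 s ∪ {c, d}).card - 1) : ℝ) *
          (factorial (2 * n - (Icc 1 s ∪ {c, d}).card) : ℝ)) * F c d
        = ((-1 : ℝ) ^ s * (factorial (s - 1) : ℝ) * (factorial (2 * n - s) : ℝ)) *
            ∑ d ∈ Icc (c + 1) s, F c d
          + (((2 * n - s : ℕ) : ℝ) * ((-1 : ℝ) ^ (s + 1) * (factorial s : ℝ) *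
              (factorial (2 * n - s - 1) : ℝ))) * F c (s + 1) := by
      intro c hc
      rw [hsplitIn c hc, Finset.sum_union (hdisjIn c), Finset.mul_sum]
      congr 1
      · refine Finset.sum_congr rfl fun d hd => ?_
        have hd' : d ∈ Icc 1 s := by
          simp only [Finset.mem_Icc] at hd ⊢
          have := (Finset.mem_Icc.mp hc).1
          omega
        rw [hcard1 c d hc hd']
      · have hconst : ∀ d ∈ Icc (s + 1) (2 * n),
            ((-1 : ℝ) ^ (Icc 1 s ∪ {c, d}).card *
              (factorial ((Icc 1 s ∪ {c, d}).card - 1) : ℝ) *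
              (factorial (2 * n - (Icc 1 s ∪ {c, d}).card) : ℝ)) * F c d
            = ((-1 : ℝ) ^ (s + 1) * (factorial s : ℝ) * (factorial (2 * n - s - 1) : ℝ))
                * F c (s + 1) := by
          intro d hd
          simp only [Finset.mem_Icc] at hd
          have hdn : d ∉ Icc 1 s := by simp only [Finset.mem_Icc]; omega
          rw [hcard2 c d hc hdn, key2 c d (Finset.mem_Icc.mp hc).2 (by omega)]
          simp only [show s + 1 - 1 = s from rfl,
            show 2 * n - (s + 1) = 2 * n - s - 1 from by omega]
        rw [Finset.sum_congr rfl hconst, Finset.sum_const, Nat.card_Icc,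
          show 2 * n + 1 - (s + 1) = 2 * n - s from by omega, nsmul_eq_mul]
        ring
    rw [Finset.sum_congr rfl step, Finset.sum_add_distrib, ← Finset.mul_sum, ← Finset.mul_sum,
      hX, hY]
  rw [hL]
  -- the second sum
  have hN : 2 * (∑ c ∈ Icc (s + 1) (2 * n), (2 * n - c)) = (2 * n - s) * (2 * n - s - 1) := by
    have : ∑ c ∈ Icc (s + 1) (2 * n), (2 * n - c) = ∑ k ∈ range (2 * n - s), k := by
      refine Finset.sum_nbij' (fun c => 2 * n - c) (fun k => 2 * n - k) ?_ ?_ ?_ ?_ ?_ <;>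
        intro x hx <;> simp only [Finset.mem_Icc, Finset.mem_range] at hx ⊢ <;> omega
    rw [this, mul_comm, Finset.sum_range_id_mul_two]
  have hL2 : ∑ c ∈ Icc (s + 1) (2 * n), ∑ d ∈ Icc (c + 1) (2 * n),
      ((-1 : ℝ) ^ (Icc 1 s ∪ {c, d}).card *
        (factorial ((Icc 1 s ∪ {c, d}).card - 1) : ℝ) *
        (factorial (2 * n - (Icc 1 s ∪ {c, d}).card) : ℝ)) * F c d
      = ((∑ c ∈ Icc (s + 1) (2 * n), (2 * n - c) : ℕ) : ℝ) *
          ((-1 : ℝ) ^ (s + 2) * (factorial (s + 1) : ℝ) * (factorial (2 * n - s - 2) : ℝ)) * Z := by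
    rw [Nat.cast_sum, Finset.sum_mul, Finset.sum_mul]
    refine Finset.sum_congr rfl fun c hc => ?_
    simp only [Finset.mem_Icc] at hc
    have hconst : ∀ d ∈ Icc (c + 1) (2 * n),
        ((-1 : ℝ) ^ (Icc 1 s ∪ {c, d}).card *
          (factorial ((Icc 1 s ∪ {c, d}).card - 1) : ℝ) *
          (factorial (2 * n - (Icc 1 s ∪ {c, d}).card) : ℝ)) * F c d
        = ((-1 : ℝ) ^ (s + 2) * (factorial (s + 1) : ℝ) * (factorial (2 * n - s - 2) : ℝ)) * Z := by
      intro d hd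
      simp only [Finset.mem_Icc] at hd
      rw [hcard3 c d (by simp only [Finset.mem_Icc]; omega)
          (by simp only [Finset.mem_Icc]; omega) (by omega),
        key3 c d (by omega) (by omega)]
      simp only [show s + 2 - 1 = s + 1 from rfl,
        show 2 * n - (s + 2) = 2 * n - s - 2 from by omega]
    rw [Finset.sum_congr rfl hconst, Finset.sum_const, Nat.card_Icc,
      show 2 * n + 1 - (c + 1) = 2 * n - c from by omega, nsmul_eq_mul]
    ring
  rw [hL2]
  -- RHS via linearity
  have hRHS : ((-1 : ℝ) ^ s * (factorial (s - 1) : ℝ) * (factorial (2 * n - s) : ℝ)) *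
      E (fun τ =>
          (∏ j : Fin (n - 1), (q (τ (a (j, 0))) (τ (a (j, 1)))) ^ 2) *
            ((∑ c ∈ Icc 1 s, ∑ d ∈ Icc (c + 1) s, (q (τ c) (τ d)) ^ 2)
              - (s : ℝ) * ∑ c ∈ Icc 1 s, (q (τ c) (τ (s + 1))) ^ 2
              + ((s : ℝ) * (s + 1) / 2) * (q (τ (s + 1)) (τ (s + 2))) ^ 2))
      = ((-1 : ℝ) ^ s * (factorial (s - 1) : ℝ) * (factorial (2 * n - s) : ℝ)) *
          (X - (s : ℝ) * Y + ((s : ℝ) * (s + 1) / 2) * Z) := by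
    congr 1
    have hdecomp : (fun τ : ℕ → S =>
        (∏ j : Fin (n - 1), (q (τ (a (j, 0))) (τ (a (j, 1)))) ^ 2) *
          ((∑ c ∈ Icc 1 s, ∑ d ∈ Icc (c + 1) s, (q (τ c) (τ d)) ^ 2)
            - (s : ℝ) * ∑ c ∈ Icc 1 s, (q (τ c) (τ (s + 1))) ^ 2
            + ((s : ℝ) * (s + 1) / 2) * (q (τ (s + 1)) (τ (s + 2))) ^ 2))
        = (∑ c ∈ Icc 1 s, ∑ d ∈ Icc (c + 1) s, fun τ : ℕ → S =>
            (∏ j : Fin (n - 1), (q (τ (a (j, 0))) (τ (a (j, 1)))) ^ 2) * (q (τ c) (τ d)) ^ 2)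
          - (s : ℝ) • (∑ c ∈ Icc 1 s, fun τ : ℕ → S =>
            (∏ j : Fin (n - 1), (q (τ (a (j, 0))) (τ (a (j, 1)))) ^ 2) * (q (τ c) (τ (s + 1))) ^ 2)
          + ((s : ℝ) * (s + 1) / 2) • (fun τ : ℕ → S =>
            (∏ j : Fin (n - 1), (q (τ (a (j, 0))) (τ (a (j, 1)))) ^ 2) *
              (q (τ (s + 1))) (τ (s + 2)) ^ 2) := by
      funext τ
      simp only [Finset.sum_apply, Pi.add_apply, Pi.sub_apply, Pi.smul_apply, smul_eq_mul]
      rw [mul_add, mul_sub]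
      congr 1
      · congr 1
        · rw [Finset.mul_sum]
          exact Finset.sum_congr rfl fun c _ => Finset.mul_sum _ _ _
        · rw [mul_left_comm, Finset.mul_sum]
      · exact mul_left_comm _ _ _
    rw [hdecomp, map_add, map_sub, map_smul, map_smul]
    simp only [map_sum, smul_eq_mul, hX, hY, hZ, hF]
  rw [hRHS]
  -- arithmetic endgame
  have hf1 : (factorial s : ℝ) = (s : ℝ) * (factorial (s - 1) : ℝ) := by
    obtain ⟨t, rfl⟩ : ∃ t, s = t + 1 := ⟨s - 1, by omega⟩
    simp [Nat.factorial_succ]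
  have hf2 : (factorial (2 * n - s) : ℝ) =
      ((2 * n - s : ℕ) : ℝ) * (factorial (2 * n - s - 1) : ℝ) := by
    obtain ⟨t, ht⟩ : ∃ t, 2 * n - s = t + 1 := ⟨2 * n - s - 1, by omega⟩
    rw [ht]
    simp [Nat.factorial_succ]
  have hf3 : (factorial (2 * n - s - 1) : ℝ) =
      ((2 * n - s - 1 : ℕ) : ℝ) * (factorial (2 * n - s - 2) : ℝ) := by
    obtain ⟨t, ht⟩ : ∃ t, 2 * n - s - 1 = t + 1 := ⟨2 * n - s - 2, by omega⟩
    rw [show 2 * n - s - 2 = t from by omega, ht]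
    simp [Nat.factorial_succ]
  have hf4 : (factorial (s + 1) : ℝ) = ((s : ℝ) + 1) * (factorial s : ℝ) := by
    rw [Nat.factorial_succ]; push_cast; ring
  have h2N : ((∑ c ∈ Icc (s + 1) (2 * n), (2 * n - c) : ℕ) : ℝ) * 2
      = ((2 * n - s : ℕ) : ℝ) * ((2 * n - s - 1 : ℕ) : ℝ) := by
    exact_mod_cast congrArg (Nat.cast (R := ℝ)) (by rw [mul_comm] at hN; exact hN)
  rw [hf2, hf4, hf1, hf3, pow_succ, pow_add]
  linear_combination ((-1 : ℝ) ^ s * (factorial (s - 1) : ℝ) * (factorial (2 * n - s - 2) : ℝ) *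
    (s : ℝ) * ((s : ℝ) + 1) * Z / 2) * h2N
end

section
/- If the recursion E_{(k)} = E_{(...,k_p−1,...)} · B_{2n−2p}^{(2p)} holds (removing one part p from the partition (k) of n), then starting from E_{(1)} = (1/2)(q²_{12} − 1) one obtains E_{(n,0,...,0)} = E_{(1)} B_2^{(2)} B_4^{(2)} ··· B_{2n−2}^{(2)}, and since B_s^{(2)} = A_s^{(2)}, the coefficient E^{VB}_{nn} = (1/n!) E_{(n,0,...,0)} equals (1/(2·n!))(q²_{12} − 1) A_2^{(2)} A_4^{(2)} ··· A_{2n−2}^{(2)} = E^{SK}_n. -/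
open Finset Nat

/-- The multiplicity function of the all-ones partition of `n` (`n` parts equal to 1). -/
def onesPartition (n : ℕ) : ℕ → ℕ := fun r => if r = 1 then n else 0

/-- From the recursion `E_{(k)} = E_{(…,k_p−1,…)} · B_{2n−2p}^{(2p)}` (removing one
part `p` from a partition `(k)` of `n`) and the initial value
`E_{(1)} = (1/2)(q²₁₂ − 1)`, one obtains
`E_{(n,0,…,0)} = E_{(1)} B₂^{(2)} ⋯ B_{2n−2}^{(2)}`; since `B_s^{(2)} = A_s^{(2)}`,
the coefficient `E^{VB}_{nn} = (1/n!) E_{(n,0,…,0)}` equals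
`(1/(2·n!))(q²₁₂ − 1) A₂^{(2)} ⋯ A_{2n−2}^{(2)} = E^{SK}_n`. -/
theorem VB_diagonal_coefficients_equal_SK
    (E : (ℕ → ℕ) → ℝ) (B : ℕ → ℕ → ℝ) (A : ℕ → ℝ) (Q : ℝ)
    (hrec : ∀ (n p : ℕ) (k : ℕ → ℕ), 1 ≤ p → p ≤ n → 1 ≤ k p →
      (∑ α ∈ Icc 1 n, α * k α = n) →
      E k = E (Function.update k p (k p - 1)) * B (2 * n - 2 * p) (2 * p))
    (hB : ∀ s, B s 2 = A s)
    (hE1 : E (onesPartition 1) = (1 / 2) * (Q - 1)) :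
    ∀ n, 1 ≤ n →
      E (onesPartition n) = E (onesPartition 1) * ∏ j ∈ Icc 1 (n - 1), B (2 * j) 2 ∧
      (1 / (factorial n : ℝ)) * E (onesPartition n)
        = (1 / (2 * (factorial n : ℝ))) * (Q - 1) * ∏ j ∈ Icc 1 (n - 1), A (2 * j) := by
  intro n hn
  induction n with
  | zero => omega
  | succ m ih =>
    rcases Nat.eq_or_lt_of_le hn with h1 | h1
    · -- m+1 = 1
      have hm : m = 0 := by omega
      subst hm
      constructor
      · simp
      · simp [hE1]
    · -- m ≥ 1
      have hm : 1 ≤ m := by omega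
      obtain ⟨ih1, _⟩ := ih hm
      have hupd : Function.update (onesPartition (m+1)) 1 ((onesPartition (m+1)) 1 - 1)
          = onesPartition m := by
        funext r
        by_cases hr : r = 1 <;> simp [Function.update, onesPartition, hr]
      have hsum : ∑ α ∈ Icc 1 (m+1), α * (onesPartition (m+1)) α = m+1 := by
        rw [Finset.sum_eq_single 1]
        · simp [onesPartition]
        · intro b _ hb; simp [onesPartition, hb]
        · intro h; simp at h
      have hstep := hrec (m+1) 1 (onesPartition (m+1)) le_rfl (by omega)
        (by simp [onesPartition]) hsum
      rw [hupd] at hstep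
      have hBn : 2 * (m+1) - 2 * 1 = 2 * m := by omega
      rw [hBn] at hstep
      have hprod : ∏ j ∈ Icc 1 ((m+1)-1), B (2*j) 2
          = (∏ j ∈ Icc 1 (m-1), B (2*j) 2) * B (2*m) 2 := by
        have : (m+1) - 1 = (m-1) + 1 := by omega
        rw [this, Finset.prod_Icc_succ_top (by omega)]
        congr 2
        omega
      have hE : E (onesPartition (m+1))
          = E (onesPartition 1) * ∏ j ∈ Icc 1 ((m+1)-1), B (2*j) 2 := by
        rw [hstep, ih1, hprod]; ring
      refine ⟨hE, ?_⟩
      have hA : ∏ j ∈ Icc 1 ((m+1)-1), B (2*j) 2 = ∏ j ∈ Icc 1 ((m+1)-1), A (2*j) :=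
        Finset.prod_congr rfl (fun j _ => hB _)
      rw [hE, hE1, hA]
      ring
end
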